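/- Let m > n be relatively prime positive integers with m/n = [a_1,...,a_d] as a continued fraction with a_1 ≥ 2 (so m ≥ 2n). Then the three continuant values A = K(a_d,...,a_2,a_1-1,1,a_1-1,a_2,...,a_d), B = K(a_d,...,a_2,2a_1,a_2,...,a_d), C = K(a_d,...,a_2,a_1,a_1,a_2,...,a_d) satisfy A = m² - n², B = 2mn, and C = m² + n²; in particular A² + B² = C². -/

import Mathlib

def contK : List ℕ → ℕ
  | [] => 1
  | [a] => a
  | a :: b :: l => a * contK (b :: l) + contK l

def cf : List ℕ → ℚ
  | [] => 0
  | [a] => a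
  | a :: b :: l => a + 1 / cf (b :: l)

/-- contK of the tail (0 for the empty list). -/
def ktK : List ℕ → ℕ
  | [] => 0
  | _ :: l => contK l

/-- contK of the dropLast (0 for the empty list). -/
def kdK : List ℕ → ℕ
  | [] => 0
  | a :: l => contK ((a :: l).dropLast)

lemma contK_cons (a : ℕ) (l : List ℕ) : contK (a :: l) = a * contK l + ktK l := by
  cases l <;> simp [contK, ktK]

lemma kdK_eq (l : List ℕ) (h : l ≠ []) : kdK l = contK l.dropLast := by
  cases l with
  | nil => exact absurd rfl h
  | cons a l => rfl

lemma kdK_cons2 (a b : ℕ) (u : List ℕ) :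
    kdK (a :: b :: u) = a * kdK (b :: u) + kdK u := by
  cases u with
  | nil => simp [kdK, contK, List.dropLast]
  | cons c u' =>
    show contK (a :: b :: (c :: u').dropLast) = _
    cases u' with
    | nil => simp [kdK, contK, List.dropLast]
    | cons d u'' =>
      rw [show contK (a :: b :: (c :: d :: u'').dropLast)
            = a * contK (b :: (c :: d :: u'').dropLast) + contK ((c :: d :: u'').dropLast)
          from by
            cases h : (c :: d :: u'').dropLast with
            | nil => simp at h
            | cons x xs => simp [contK]]
      rfl

lemma contK_split : ∀ u v : List ℕ, contK (u ++ v) = contK u * contK v + kdK u * ktK v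
  | [], v => by simp [contK, kdK]
  | [a], v => by
    rw [show ([a] ++ v) = a :: v from rfl, contK_cons]
    simp [contK, kdK]
  | a :: b :: u, v => by
    have h1 := contK_split (b :: u) v
    have h2 := contK_split u v
    show a * contK (b :: u ++ v) + contK (u ++ v) = _
    rw [h1, h2, kdK_cons2]
    show _ = (a * contK (b :: u) + contK u) * contK v + _
    ring

lemma contK_reverse : ∀ l : List ℕ, contK l.reverse = contK l
  | [] => rfl
  | [a] => rfl
  | a :: b :: l => by
    have h1 := contK_reverse (b :: l)
    have h2 := contK_reverse l
    rw [show (a :: b :: l).reverse = (b :: l).reverse ++ [a] by simp,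
        contK_split, kdK_eq _ (by simp),
        show (b :: l).reverse = l.reverse ++ [b] by simp, List.dropLast_concat,
        show l.reverse ++ [b] = (b :: l).reverse by simp, h1, h2]
    show _ = a * contK (b :: l) + contK l
    simp [ktK, contK]
    ring

lemma kdK_reverse (l : List ℕ) : kdK l.reverse = ktK l := by
  cases l with
  | nil => rfl
  | cons a l =>
    rw [show (a :: l).reverse = l.reverse ++ [a] by simp, kdK_eq _ (by simp),
        List.dropLast_concat, contK_reverse]
    rfl

lemma contK_pos : ∀ l : List ℕ, (∀ x ∈ l, 0 < x) → 0 < contK l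
  | [], _ => one_pos
  | [a], h => h a (by simp)
  | a :: b :: l, h => by
    have h2 := contK_pos l (fun x hx => h x (by simp [hx]))
    show 0 < a * contK (b :: l) + contK l
    exact Nat.lt_of_lt_of_le h2 (Nat.le_add_left _ _)

lemma cf_eq : ∀ l : List ℕ, (∀ x ∈ l, 0 < x) → l ≠ [] →
    cf l = (contK l : ℚ) / (contK l.tail : ℚ)
  | [], _, h => absurd rfl h
  | [a], _, _ => by simp [cf, contK]
  | a :: b :: l, h, _ => by
    have ih := cf_eq (b :: l) (fun x hx => h x (by simp [hx])) (by simp)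
    have hpos : 0 < contK (b :: l) := contK_pos _ (fun x hx => h x (by simp [hx]))
    have hne : (contK (b :: l) : ℚ) ≠ 0 := by exact_mod_cast hpos.ne'
    show (a : ℚ) + 1 / cf (b :: l) = ((contK (a :: b :: l) : ℕ) : ℚ) / (contK (b :: l) : ℚ)
    rw [ih, show contK (a :: b :: l) = a * contK (b :: l) + contK l from rfl]
    show (a : ℚ) + 1 / ((contK (b :: l) : ℚ) / (contK l : ℚ)) = _
    rw [one_div_div]
    push_cast
    field_simp

lemma contK_coprime : ∀ l : List ℕ, Nat.Coprime (contK l) (ktK l)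
  | [] => by simp [contK, ktK]
  | a :: l => by
    have ih := contK_coprime l
    rw [contK_cons]
    show Nat.Coprime (a * contK l + ktK l) (contK l)
    rw [add_comm, mul_comm]
    exact (Nat.coprime_add_mul_left_left _ _ _).mpr ih.symm

theorem pythagorean_triple_continuants (m n a₁ : ℕ) (t : List ℕ)
    (hn : 0 < n) (hmn : n < m) (hcop : Nat.Coprime m n)
    (ha₁ : 2 ≤ a₁) (ht : ∀ x ∈ t, 0 < x)
    (hcf : cf (a₁ :: t) = (m : ℚ) / (n : ℚ)) :
    contK (t.reverse ++ [a₁ - 1, 1, a₁ - 1] ++ t) = m ^ 2 - n ^ 2 ∧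
    contK (t.reverse ++ [2 * a₁] ++ t) = 2 * m * n ∧
    contK (t.reverse ++ [a₁, a₁] ++ t) = m ^ 2 + n ^ 2 ∧
    (contK (t.reverse ++ [a₁ - 1, 1, a₁ - 1] ++ t)) ^ 2 +
      (contK (t.reverse ++ [2 * a₁] ++ t)) ^ 2 =
      (contK (t.reverse ++ [a₁, a₁] ++ t)) ^ 2 := by
  -- identify contK (a₁ :: t) = m and contK t = n
  have hpos : ∀ x ∈ a₁ :: t, 0 < x := by
    intro x hx
    rcases List.mem_cons.mp hx with rfl | hx
    · omega
    · exact ht x hx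
  have hKt : 0 < contK t := contK_pos t ht
  have hK1 : 0 < contK (a₁ :: t) := contK_pos _ hpos
  have hcf' : (contK (a₁ :: t) : ℚ) / (contK t : ℚ) = (m : ℚ) / (n : ℚ) := by
    have h := cf_eq (a₁ :: t) hpos (by simp)
    rw [List.tail_cons] at h
    exact h.symm.trans hcf
  have hcross : contK (a₁ :: t) * n = m * contK t := by
    have hKtne : (contK t : ℚ) ≠ 0 := by exact_mod_cast hKt.ne'
    have hnne : (n : ℚ) ≠ 0 := by exact_mod_cast hn.ne'
    have := hcf'
    field_simp at this
    rw [mul_comm m]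
    exact_mod_cast this
  have hcop1 : Nat.Coprime (contK (a₁ :: t)) (contK t) := contK_coprime (a₁ :: t)
  have hm : contK (a₁ :: t) = m := by
    have hd1 : m ∣ contK (a₁ :: t) :=
      hcop.dvd_of_dvd_mul_right (hcross ▸ dvd_mul_right m (contK t))
    have hd2 : contK (a₁ :: t) ∣ m :=
      hcop1.dvd_of_dvd_mul_right (hcross ▸ dvd_mul_right (contK (a₁ :: t)) n)
    exact Nat.dvd_antisymm hd2 hd1
  have hnn : contK t = n := by
    have h := hcross
    rw [hm] at h
    exact (Nat.eq_of_mul_eq_mul_left (by omega) h).symm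
  -- abbreviations
  set T := ktK t with hT
  have hmval : m = a₁ * n + T := by rw [← hm, contK_cons, hnn]
  obtain ⟨b, hb⟩ : ∃ b, a₁ = b + 1 := ⟨a₁ - 1, by omega⟩
  have hb1 : a₁ - 1 = b := by omega
  -- generic splitting
  have key : ∀ X : List ℕ, contK (t.reverse ++ X) = n * contK X + T * ktK X := by
    intro X
    rw [contK_split, contK_reverse, kdK_reverse, hnn]
  -- the three values
  have hA : contK (t.reverse ++ [a₁ - 1, 1, a₁ - 1] ++ t) + n ^ 2 = m ^ 2 := by
    rw [List.append_assoc, show [a₁ - 1, 1, a₁ - 1] ++ t = (a₁-1) :: 1 :: (a₁-1) :: t from rfl,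
        key]
    rw [show contK ((a₁-1) :: 1 :: (a₁-1) :: t)
          = (a₁-1) * contK (1 :: (a₁-1) :: t) + contK ((a₁-1) :: t) from rfl,
        show contK (1 :: (a₁-1) :: t) = 1 * contK ((a₁-1) :: t) + contK t from rfl,
        show ktK ((a₁-1) :: 1 :: (a₁-1) :: t) = contK (1 :: (a₁-1) :: t) from rfl,
        show contK (1 :: (a₁-1) :: t) = 1 * contK ((a₁-1) :: t) + contK t from rfl,
        contK_cons, hnn, ← hT, hb1, hmval, hb]
    ring
  have hB : contK (t.reverse ++ [2 * a₁] ++ t) = 2 * m * n := by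
    rw [List.append_assoc, show [2 * a₁] ++ t = (2 * a₁) :: t from rfl, key, contK_cons,
        show ktK ((2 * a₁) :: t) = contK t from rfl, hnn, ← hT, hmval]
    ring
  have hC : contK (t.reverse ++ [a₁, a₁] ++ t) = m ^ 2 + n ^ 2 := by
    rw [List.append_assoc, show [a₁, a₁] ++ t = a₁ :: a₁ :: t from rfl, key,
        show contK (a₁ :: a₁ :: t) = a₁ * contK (a₁ :: t) + contK t from rfl,
        show ktK (a₁ :: a₁ :: t) = contK (a₁ :: t) from rfl,
        contK_cons, hnn, ← hT, hmval]
    ring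
  refine ⟨by omega, hB, hC, ?_⟩
  have h1 : contK (t.reverse ++ [a₁ - 1, 1, a₁ - 1] ++ t) = m ^ 2 - n ^ 2 := by omega
  rw [h1, hB, hC]
  have hle : n ^ 2 ≤ m ^ 2 := by nlinarith
  zify [hle]
  ring
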